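/- For the counterexample system, the sampled-data derivative of h satisfies the ISSf-BF bound: for all x, e ∈ ℝ² with ‖x‖ ≤ r, we have -‖x‖²·(1 - ‖x+e‖²) ≥ -(1 - ‖x‖²) - 2r³‖e‖. -/

import Mathlib

/-- ISSf-BF bound for the sampled-data counterexample. -/
theorem stmt3 (r : ℝ) (hr : 1 ≤ r) (x e : EuclideanSpace ℝ (Fin 2))
    (hx : ‖x‖ ≤ r) :
    -‖x‖ ^ 2 * (1 - ‖x + e‖ ^ 2) ≥ -(1 - ‖x‖ ^ 2) - 2 * r ^ 3 * ‖e‖ := by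
  have hexp : ‖x + e‖ ^ 2 = ‖x‖ ^ 2 + 2 * (inner ℝ x e : ℝ) + ‖e‖ ^ 2 := by
    rw [← real_inner_self_eq_norm_sq, ← real_inner_self_eq_norm_sq,
      ← real_inner_self_eq_norm_sq, inner_add_add_self]
    rw [real_inner_comm e x]; ring
  have hCS : -(‖x‖ * ‖e‖) ≤ (inner ℝ x e : ℝ) := neg_le_of_abs_le (abs_real_inner_le_norm x e)
  have hxn : (0:ℝ) ≤ ‖x‖ := norm_nonneg x
  have hen : (0:ℝ) ≤ ‖e‖ := norm_nonneg e
  nlinarith [sq_nonneg (1 - ‖x‖^2), sq_nonneg (‖x‖*‖e‖), mul_nonneg hxn hen,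
    mul_nonneg (mul_nonneg hxn hxn) hen, sq_nonneg ‖x‖,
    mul_le_mul_of_nonneg_right (mul_le_mul (mul_le_mul hx hx hxn (by linarith)) hx hxn (by positivity)) hen]
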